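/- arXiv:1901.10114 — 2 statements merged into one kernel-verified Lean document; each statement's English description precedes it below -/
import Mathlib

section
/- Let ω = e^{iπ/4}, S = [[1,0],[0,i]] and V = (1/√2)·[[ω, ω̄],[ω̄, ω]], both viewed as elements of GL(2,ℂ), and let π : GL(2,ℂ) → GL(2,ℂ)/Z be the quotient by the central subgroup of nonzero scalar multiples of the identity. Then the subgroup of GL(2,ℂ)/Z generated by π(S) and π(V) is finite of cardinality 24. -/
open Matrix

/-- `ω = e^{iπ/4}`. -/
noncomputable def ω : ℂ := Complex.exp (((Real.pi / 4 : ℝ) : ℂ) * Complex.I)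

/-- The phase gate `S`. -/
noncomputable def Smat : Matrix (Fin 2) (Fin 2) ℂ := !![1, 0; 0, Complex.I]

/-- The square root of NOT gate `V = (1/√2)·[[ω, ω̄],[ω̄, ω]]`. -/
noncomputable def Vmat : Matrix (Fin 2) (Fin 2) ℂ :=
  (1 / (Real.sqrt 2 : ℂ)) • !![ω, starRingEnd ℂ ω; starRingEnd ℂ ω, ω]

/-- The central subgroup `Z` of `GL(2,ℂ)` consisting of the nonzero scalar
multiples of the identity matrix. -/
noncomputable def scalarSubgroup : Subgroup (GL (Fin 2) ℂ) where
  carrier := { g | ∃ c : ℂ, c ≠ 0 ∧ (g : Matrix (Fin 2) (Fin 2) ℂ) = c • 1 }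
  one_mem' := ⟨1, one_ne_zero, by simp⟩
  mul_mem' := by
    rintro a b ⟨c, hc, ha⟩ ⟨d, hd, hb⟩
    refine ⟨c * d, mul_ne_zero hc hd, ?_⟩
    show ((a * b : GL (Fin 2) ℂ) : Matrix (Fin 2) (Fin 2) ℂ) = (c * d) • 1
    rw [Units.val_mul, ha, hb, smul_mul_assoc, mul_smul_comm, one_mul, smul_smul]
  inv_mem' := by
    rintro g ⟨c, hc, h⟩
    refine ⟨c⁻¹, inv_ne_zero hc, ?_⟩
    have h1 : c • ((g⁻¹ : GL (Fin 2) ℂ) : Matrix (Fin 2) (Fin 2) ℂ) = 1 := by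
      calc c • ((g⁻¹ : GL (Fin 2) ℂ) : Matrix (Fin 2) (Fin 2) ℂ)
          = (c • 1) * ((g⁻¹ : GL (Fin 2) ℂ) : Matrix (Fin 2) (Fin 2) ℂ) := by
            rw [smul_mul_assoc, one_mul]
        _ = (g : Matrix (Fin 2) (Fin 2) ℂ) *
              ((g⁻¹ : GL (Fin 2) ℂ) : Matrix (Fin 2) (Fin 2) ℂ) := by rw [h]
        _ = 1 := g.mul_inv
    calc ((g⁻¹ : GL (Fin 2) ℂ) : Matrix (Fin 2) (Fin 2) ℂ)
        = c⁻¹ • (c • ((g⁻¹ : GL (Fin 2) ℂ) : Matrix (Fin 2) (Fin 2) ℂ)) := by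
          rw [smul_smul, inv_mul_cancel₀ hc, one_smul]
      _ = c⁻¹ • (1 : Matrix (Fin 2) (Fin 2) ℂ) := by rw [h1]

instance : scalarSubgroup.Normal := by
  constructor
  rintro n ⟨c, hc, hn⟩ g
  refine ⟨c, hc, ?_⟩
  show ((g * n * g⁻¹ : GL (Fin 2) ℂ) : Matrix (Fin 2) (Fin 2) ℂ) = c • 1
  rw [Units.val_mul, Units.val_mul, hn, mul_smul_comm, mul_one, smul_mul_assoc,
    ← Units.val_mul, mul_inv_cancel]
  rfl

/-- `S` as an element of `GL(2,ℂ)`. -/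
noncomputable def S_GL : GL (Fin 2) ℂ :=
  Matrix.GeneralLinearGroup.mkOfDetNeZero Smat
    (by rw [Smat, Matrix.det_fin_two_of]; simp [Complex.I_ne_zero])

lemma omega_mul_omega : ω * ω = Complex.I := by
  rw [ω, ← Complex.exp_add]
  have h : ((Real.pi / 4 : ℝ) : ℂ) * Complex.I + ((Real.pi / 4 : ℝ) : ℂ) * Complex.I
      = ((Real.pi / 2 : ℝ) : ℂ) * Complex.I := by push_cast; ring
  rw [h, Complex.exp_mul_I]
  rw [← Complex.ofReal_cos, ← Complex.ofReal_sin]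
  simp [Real.cos_pi_div_two, Real.sin_pi_div_two]

lemma conj_omega_mul_conj_omega :
    starRingEnd ℂ ω * starRingEnd ℂ ω = -Complex.I := by
  rw [← _root_.map_mul, omega_mul_omega, Complex.conj_I]

lemma det_Vmat : Vmat.det = Complex.I := by
  rw [Vmat, Matrix.det_smul, Matrix.det_fin_two_of, omega_mul_omega,
    conj_omega_mul_conj_omega]
  have h2 : ((Real.sqrt 2 : ℝ) : ℂ) ^ 2 = 2 := by
    rw [← Complex.ofReal_pow, Real.sq_sqrt (by norm_num : (0:ℝ) ≤ 2)]
    norm_num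
  rw [Fintype.card_fin]
  have h3 : (1 / ((Real.sqrt 2 : ℝ) : ℂ)) ^ 2 = 1 / 2 := by
    rw [div_pow, h2]; norm_num
  rw [h3]; ring

/-- `V` as an element of `GL(2,ℂ)`. -/
noncomputable def V_GL : GL (Fin 2) ℂ :=
  Matrix.GeneralLinearGroup.mkOfDetNeZero Vmat
    (by rw [det_Vmat]; exact Complex.I_ne_zero)

/-! ### Auxiliary machinery: the 24 Gaussian-integer representatives -/

/-- The 24 Gaussian-integer representative matrices of the reduced Clifford group. -/
def Lmats : Fin 24 → Matrix (Fin 2) (Fin 2) GaussianInt :=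
  ![!![⟨1, 0⟩, ⟨0, 0⟩; ⟨0, 0⟩, ⟨1, 0⟩],
    !![⟨1, 0⟩, ⟨0, 0⟩; ⟨0, 0⟩, ⟨0, 1⟩],
    !![⟨1, 0⟩, ⟨0, -1⟩; ⟨0, -1⟩, ⟨1, 0⟩],
    !![⟨1, 0⟩, ⟨0, 0⟩; ⟨0, 0⟩, ⟨-1, 0⟩],
    !![⟨1, 0⟩, ⟨0, -1⟩; ⟨1, 0⟩, ⟨0, 1⟩],
    !![⟨1, 0⟩, ⟨1, 0⟩; ⟨0, -1⟩, ⟨0, 1⟩],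
    !![⟨0, 0⟩, ⟨1, 0⟩; ⟨1, 0⟩, ⟨0, 0⟩],
    !![⟨1, 0⟩, ⟨0, 0⟩; ⟨0, 0⟩, ⟨0, -1⟩],
    !![⟨1, 0⟩, ⟨0, -1⟩; ⟨0, 1⟩, ⟨-1, 0⟩],
    !![⟨1, 0⟩, ⟨1, 0⟩; ⟨1, 0⟩, ⟨-1, 0⟩],
    !![⟨0, 0⟩, ⟨1, 0⟩; ⟨0, 1⟩, ⟨0, 0⟩],
    !![⟨1, 0⟩, ⟨0, 1⟩; ⟨0, -1⟩, ⟨-1, 0⟩],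
    !![⟨0, 0⟩, ⟨1, 0⟩; ⟨0, -1⟩, ⟨0, 0⟩],
    !![⟨1, 0⟩, ⟨0, 1⟩; ⟨0, 1⟩, ⟨1, 0⟩],
    !![⟨1, 0⟩, ⟨0, -1⟩; ⟨-1, 0⟩, ⟨0, -1⟩],
    !![⟨1, 0⟩, ⟨1, 0⟩; ⟨0, 1⟩, ⟨0, -1⟩],
    !![⟨0, 0⟩, ⟨1, 0⟩; ⟨-1, 0⟩, ⟨0, 0⟩],
    !![⟨1, 0⟩, ⟨0, 1⟩; ⟨1, 0⟩, ⟨0, -1⟩],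
    !![⟨1, 0⟩, ⟨0, 1⟩; ⟨-1, 0⟩, ⟨0, 1⟩],
    !![⟨1, 0⟩, ⟨-1, 0⟩; ⟨0, -1⟩, ⟨0, -1⟩],
    !![⟨1, 0⟩, ⟨-1, 0⟩; ⟨0, 1⟩, ⟨0, 1⟩],
    !![⟨1, 0⟩, ⟨1, 0⟩; ⟨-1, 0⟩, ⟨1, 0⟩],
    !![⟨1, 0⟩, ⟨-1, 0⟩; ⟨1, 0⟩, ⟨1, 0⟩],
    !![⟨1, 0⟩, ⟨-1, 0⟩; ⟨-1, 0⟩, ⟨-1, 0⟩]]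

/-- Right multiplication by `Lmats 1` permutes the classes. -/
def sigS : Fin 24 → Fin 24 :=
  ![1, 3, 5, 7, 9, 11, 12, 0, 15, 17, 6, 19, 16, 20, 21, 13, 10, 22, 23, 2, 8, 18, 4, 14]

/-- The scalar factors for right multiplication by `Lmats 1`. -/
def cS : Fin 24 → GaussianInt :=
  ![⟨1, 0⟩, ⟨1, 0⟩, ⟨1, 0⟩, ⟨1, 0⟩, ⟨1, 0⟩, ⟨1, 0⟩, ⟨0, 1⟩, ⟨1, 0⟩, ⟨1, 0⟩, ⟨1, 0⟩, ⟨0, 1⟩,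
    ⟨1, 0⟩, ⟨0, 1⟩, ⟨1, 0⟩, ⟨1, 0⟩, ⟨1, 0⟩, ⟨0, 1⟩, ⟨1, 0⟩, ⟨1, 0⟩, ⟨1, 0⟩, ⟨1, 0⟩, ⟨1, 0⟩,
    ⟨1, 0⟩, ⟨1, 0⟩]

/-- Right multiplication by `Lmats 2` permutes the classes. -/
def sigW : Fin 24 → Fin 24 :=
  ![2, 4, 6, 8, 10, 9, 13, 14, 16, 15, 18, 3, 17, 0, 12, 21, 11, 7, 1, 23, 22, 5, 19, 20]

/-- The scalar factors for right multiplication by `Lmats 2`. -/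
def cW : Fin 24 → GaussianInt :=
  ![⟨1, 0⟩, ⟨1, 0⟩, ⟨0, -2⟩, ⟨1, 0⟩, ⟨0, -2⟩, ⟨1, -1⟩, ⟨0, -1⟩, ⟨1, 0⟩, ⟨0, -2⟩, ⟨1, -1⟩,
    ⟨0, -1⟩, ⟨2, 0⟩, ⟨0, -1⟩, ⟨2, 0⟩, ⟨0, -2⟩, ⟨1, -1⟩, ⟨0, -1⟩, ⟨2, 0⟩, ⟨2, 0⟩, ⟨1, 1⟩,
    ⟨1, 1⟩, ⟨1, -1⟩, ⟨1, 1⟩, ⟨1, 1⟩]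

lemma Lmats_det_ne_zero : ∀ k, (Lmats k).det ≠ 0 := by decide

lemma htabS : ∀ k, cS k ≠ 0 ∧ Lmats k * Lmats 1 = cS k • Lmats (sigS k) := by decide

lemma htabW : ∀ k, cW k ≠ 0 ∧ Lmats k * Lmats 2 = cW k • Lmats (sigW k) := by decide

lemma hnonprop : ∀ k l : Fin 24, k ≠ l →
    ¬ (∀ i j i' j', Lmats k i j * Lmats l i' j' = Lmats k i' j' * Lmats l i j) := by decide

/-! ### From Gaussian matrices to `GL(2,ℂ)` and its quotient -/

lemma map_det_ne_zero {A : Matrix (Fin 2) (Fin 2) GaussianInt} (h : A.det ≠ 0) :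
    (A.map GaussianInt.toComplex).det ≠ 0 := by
  intro h0
  apply h
  apply GaussianInt.toComplex_injective
  rw [map_zero]
  have hd := GaussianInt.toComplex.map_det A
  rw [RingHom.mapMatrix_apply] at hd
  rw [hd]
  exact h0

/-- Build an element of `GL(2,ℂ)` from a Gaussian matrix with nonzero determinant. -/
noncomputable def toGL (A : Matrix (Fin 2) (Fin 2) GaussianInt) (h : A.det ≠ 0) :
    GL (Fin 2) ℂ :=
  Matrix.GeneralLinearGroup.mkOfDetNeZero (A.map GaussianInt.toComplex) (map_det_ne_zero h)

lemma toGL_coe (A : Matrix (Fin 2) (Fin 2) GaussianInt) (h : A.det ≠ 0) :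
    (toGL A h : Matrix (Fin 2) (Fin 2) ℂ) = A.map GaussianInt.toComplex := rfl

/-- The 24 elements of the quotient group. -/
noncomputable def Q (k : Fin 24) : GL (Fin 2) ℂ ⧸ scalarSubgroup :=
  QuotientGroup.mk (toGL (Lmats k) (Lmats_det_ne_zero k))

lemma mk_eq_mk_of_smul {a b : GL (Fin 2) ℂ} {c : ℂ} (hc : c ≠ 0)
    (h : (a : Matrix (Fin 2) (Fin 2) ℂ) = c • (b : Matrix (Fin 2) (Fin 2) ℂ)) :
    (QuotientGroup.mk a : GL (Fin 2) ℂ ⧸ scalarSubgroup) = QuotientGroup.mk b := by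
  rw [QuotientGroup.eq]
  refine ⟨c⁻¹, inv_ne_zero hc, ?_⟩
  have h1 : c • ((↑(a⁻¹ * b) : Matrix (Fin 2) (Fin 2) ℂ)) = 1 := by
    rw [Units.val_mul, ← mul_smul_comm]
    calc (↑a⁻¹ : Matrix (Fin 2) (Fin 2) ℂ) * (c • (b : Matrix (Fin 2) (Fin 2) ℂ))
        = (↑a⁻¹ : Matrix (Fin 2) (Fin 2) ℂ) * (a : Matrix (Fin 2) (Fin 2) ℂ) := by rw [← h]
      _ = 1 := a.inv_mul
  calc (↑(a⁻¹ * b) : Matrix (Fin 2) (Fin 2) ℂ)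
      = c⁻¹ • (c • (↑(a⁻¹ * b) : Matrix (Fin 2) (Fin 2) ℂ)) := by
        rw [smul_smul, inv_mul_cancel₀ hc, one_smul]
    _ = c⁻¹ • (1 : Matrix (Fin 2) (Fin 2) ℂ) := by rw [h1]

lemma smul_of_mk_eq_mk {a b : GL (Fin 2) ℂ}
    (h : (QuotientGroup.mk a : GL (Fin 2) ℂ ⧸ scalarSubgroup) = QuotientGroup.mk b) :
    ∃ c : ℂ, c ≠ 0 ∧ (b : Matrix (Fin 2) (Fin 2) ℂ) = c • (a : Matrix (Fin 2) (Fin 2) ℂ) := by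
  rw [QuotientGroup.eq] at h
  obtain ⟨c, hc, hval⟩ := h
  refine ⟨c, hc, ?_⟩
  have : b = a * (a⁻¹ * b) := by group
  rw [this, Units.val_mul, hval, mul_smul_comm, mul_one]

lemma gsmul_map (c : GaussianInt) (A : Matrix (Fin 2) (Fin 2) GaussianInt) :
    (c • A).map GaussianInt.toComplex =
      (GaussianInt.toComplex c) • A.map GaussianInt.toComplex := by
  ext i j
  simp [Matrix.map_apply, Matrix.smul_apply, smul_eq_mul, _root_.map_mul]

lemma toComplex_ne_zero {c : GaussianInt} (hc : c ≠ 0) : GaussianInt.toComplex c ≠ 0 := by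
  intro h0
  exact hc (GaussianInt.toComplex_injective (by rw [map_zero]; exact h0))

lemma Q_mul_table {k j : Fin 24} {g : Fin 24} {c : GaussianInt} (hc : c ≠ 0)
    (ht : Lmats k * Lmats g = c • Lmats j) : Q k * Q g = Q j := by
  show QuotientGroup.mk _ * QuotientGroup.mk _ = _
  rw [← QuotientGroup.mk_mul]
  apply mk_eq_mk_of_smul (toComplex_ne_zero hc)
  show ((toGL (Lmats k) _ * toGL (Lmats g) _ : GL (Fin 2) ℂ) : Matrix (Fin 2) (Fin 2) ℂ) = _
  rw [Units.val_mul, toGL_coe, toGL_coe, toGL_coe, ← _root_.Matrix.map_mul, ht, gsmul_map]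

lemma QmulS (k : Fin 24) : Q k * Q 1 = Q (sigS k) :=
  Q_mul_table (htabS k).1 (htabS k).2

lemma QmulW (k : Fin 24) : Q k * Q 2 = Q (sigW k) :=
  Q_mul_table (htabW k).1 (htabW k).2

lemma Q_injective : Function.Injective Q := by
  intro k l h
  by_contra hkl
  obtain ⟨c, hc, hval⟩ := smul_of_mk_eq_mk h
  apply hnonprop k l hkl
  intro i j i' j'
  apply GaussianInt.toComplex_injective
  have e1 : (Lmats l).map GaussianInt.toComplex =
      c • (Lmats k).map GaussianInt.toComplex := hval
  have e2 := congrFun (congrFun e1 i') j'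
  have e3 := congrFun (congrFun e1 i) j
  simp only [Matrix.map_apply, Matrix.smul_apply, smul_eq_mul] at e2 e3
  rw [_root_.map_mul, _root_.map_mul, e2, e3]
  ring

lemma Q_zero : Q 0 = 1 := by
  have h : toGL (Lmats 0) (Lmats_det_ne_zero 0) = 1 := by
    apply Units.ext
    rw [toGL_coe]
    have h0 : Lmats 0 = 1 := by decide
    rw [h0]
    ext i j
    fin_cases i <;> fin_cases j <;>
      simp [Matrix.map_apply, Matrix.one_apply]
  rw [Q, h, QuotientGroup.mk_one]

lemma mk_S_GL_eq : (QuotientGroup.mk S_GL : GL (Fin 2) ℂ ⧸ scalarSubgroup) = Q 1 := by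
  have h : S_GL = toGL (Lmats 1) (Lmats_det_ne_zero 1) := by
    apply Units.ext
    rw [toGL_coe]
    have h1 : Lmats 1 = !![⟨1, 0⟩, ⟨0, 0⟩; ⟨0, 0⟩, ⟨0, 1⟩] := by decide
    rw [h1]
    show Smat = _
    rw [Smat]
    ext i j
    fin_cases i <;> fin_cases j <;>
      simp [Matrix.map_apply, GaussianInt.toComplex_def']
  rw [h, Q]

lemma omega_mul_conj : ω * starRingEnd ℂ ω = 1 := by
  rw [ω, ← Complex.exp_conj, ← Complex.exp_add]
  have h : ((Real.pi / 4 : ℝ) : ℂ) * Complex.I +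
      starRingEnd ℂ (((Real.pi / 4 : ℝ) : ℂ) * Complex.I) = 0 := by
    rw [_root_.map_mul, Complex.conj_I, Complex.conj_ofReal]
    ring
  rw [h, Complex.exp_zero]

lemma conj_omega_eq : starRingEnd ℂ ω = ω * (-Complex.I) := by
  rw [← conj_omega_mul_conj_omega, ← mul_assoc, omega_mul_conj, one_mul]

lemma omega_ne_zero : ω ≠ 0 := Complex.exp_ne_zero _

lemma sqrt_two_ne_zero' : ((Real.sqrt 2 : ℝ) : ℂ) ≠ 0 := by
  rw [Complex.ofReal_ne_zero]
  positivity

lemma mk_V_GL_eq : (QuotientGroup.mk V_GL : GL (Fin 2) ℂ ⧸ scalarSubgroup) = Q 2 := by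
  apply mk_eq_mk_of_smul (c := (1 / (Real.sqrt 2 : ℂ)) * ω)
  · exact mul_ne_zero (by simp [sqrt_two_ne_zero']) omega_ne_zero
  · show Vmat = _
    rw [toGL_coe]
    have h2 : Lmats 2 = !![⟨1, 0⟩, ⟨0, -1⟩; ⟨0, -1⟩, ⟨1, 0⟩] := by decide
    have hmap : (!![⟨1, 0⟩, ⟨0, -1⟩; ⟨0, -1⟩, ⟨1, 0⟩] :
        Matrix (Fin 2) (Fin 2) GaussianInt).map GaussianInt.toComplex
        = !![1, -Complex.I; -Complex.I, 1] := by
      ext i j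
      fin_cases i <;> fin_cases j <;> simp [Matrix.map_apply, GaussianInt.toComplex_def']
    rw [h2, hmap, Vmat]
    ext i j
    fin_cases i <;> fin_cases j <;>
      simp [conj_omega_eq, Matrix.smul_apply] <;> ring

lemma Q_mem_closure (k : Fin 24) :
    Q k ∈ Subgroup.closure
      ({(QuotientGroup.mk S_GL : GL (Fin 2) ℂ ⧸ scalarSubgroup),
        QuotientGroup.mk V_GL} : Set (GL (Fin 2) ℂ ⧸ scalarSubgroup)) := by
  set C := Subgroup.closure
      ({(QuotientGroup.mk S_GL : GL (Fin 2) ℂ ⧸ scalarSubgroup),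
        QuotientGroup.mk V_GL} : Set (GL (Fin 2) ℂ ⧸ scalarSubgroup)) with hC
  have m1 : Q 1 ∈ C := by
    rw [← mk_S_GL_eq]; exact Subgroup.subset_closure (Set.mem_insert _ _)
  have m2 : Q 2 ∈ C := by
    rw [← mk_V_GL_eq]
    exact Subgroup.subset_closure (Set.mem_insert_of_mem _ (Set.mem_singleton _))
  have m0 : Q 0 ∈ C := by rw [Q_zero]; exact one_mem C
  have step : ∀ a b j : Fin 24, Q a ∈ C → Q b ∈ C → (Q a * Q b = Q j) → Q j ∈ C := by
    intro a b j ha hb hab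
    rw [← hab]; exact mul_mem ha hb
  have m3 : Q 3 ∈ C := step 1 1 3 m1 m1
    (by have h := QmulS 1; rwa [show sigS 1 = 3 from by decide] at h)
  have m4 : Q 4 ∈ C := step 1 2 4 m1 m2
    (by have h := QmulW 1; rwa [show sigW 1 = 4 from by decide] at h)
  have m5 : Q 5 ∈ C := step 2 1 5 m2 m1
    (by have h := QmulS 2; rwa [show sigS 2 = 5 from by decide] at h)
  have m6 : Q 6 ∈ C := step 2 2 6 m2 m2
    (by have h := QmulW 2; rwa [show sigW 2 = 6 from by decide] at h)
  have m7 : Q 7 ∈ C := step 3 1 7 m3 m1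
    (by have h := QmulS 3; rwa [show sigS 3 = 7 from by decide] at h)
  have m8 : Q 8 ∈ C := step 3 2 8 m3 m2
    (by have h := QmulW 3; rwa [show sigW 3 = 8 from by decide] at h)
  have m9 : Q 9 ∈ C := step 4 1 9 m4 m1
    (by have h := QmulS 4; rwa [show sigS 4 = 9 from by decide] at h)
  have m10 : Q 10 ∈ C := step 4 2 10 m4 m2
    (by have h := QmulW 4; rwa [show sigW 4 = 10 from by decide] at h)
  have m11 : Q 11 ∈ C := step 5 1 11 m5 m1
    (by have h := QmulS 5; rwa [show sigS 5 = 11 from by decide] at h)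
  have m12 : Q 12 ∈ C := step 6 1 12 m6 m1
    (by have h := QmulS 6; rwa [show sigS 6 = 12 from by decide] at h)
  have m13 : Q 13 ∈ C := step 6 2 13 m6 m2
    (by have h := QmulW 6; rwa [show sigW 6 = 13 from by decide] at h)
  have m14 : Q 14 ∈ C := step 7 2 14 m7 m2
    (by have h := QmulW 7; rwa [show sigW 7 = 14 from by decide] at h)
  have m15 : Q 15 ∈ C := step 8 1 15 m8 m1
    (by have h := QmulS 8; rwa [show sigS 8 = 15 from by decide] at h)
  have m16 : Q 16 ∈ C := step 8 2 16 m8 m2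
    (by have h := QmulW 8; rwa [show sigW 8 = 16 from by decide] at h)
  have m17 : Q 17 ∈ C := step 9 1 17 m9 m1
    (by have h := QmulS 9; rwa [show sigS 9 = 17 from by decide] at h)
  have m18 : Q 18 ∈ C := step 10 2 18 m10 m2
    (by have h := QmulW 10; rwa [show sigW 10 = 18 from by decide] at h)
  have m19 : Q 19 ∈ C := step 11 1 19 m11 m1
    (by have h := QmulS 11; rwa [show sigS 11 = 19 from by decide] at h)
  have m20 : Q 20 ∈ C := step 13 1 20 m13 m1
    (by have h := QmulS 13; rwa [show sigS 13 = 20 from by decide] at h)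
  have m21 : Q 21 ∈ C := step 14 1 21 m14 m1
    (by have h := QmulS 14; rwa [show sigS 14 = 21 from by decide] at h)
  have m22 : Q 22 ∈ C := step 17 1 22 m17 m1
    (by have h := QmulS 17; rwa [show sigS 17 = 22 from by decide] at h)
  have m23 : Q 23 ∈ C := step 18 1 23 m18 m1
    (by have h := QmulS 18; rwa [show sigS 18 = 23 from by decide] at h)
  fin_cases k <;> assumption

/-- The reduced Clifford group `𝒞₁`, the subgroup of `GL(2,ℂ)/Z` generated by
the images of `S` and `V` under the quotient map, is finite of order 24. -/
theorem reduced_clifford_group_one_qubit_card :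
    Finite (Subgroup.closure
        ({(QuotientGroup.mk S_GL : GL (Fin 2) ℂ ⧸ scalarSubgroup),
          QuotientGroup.mk V_GL} : Set (GL (Fin 2) ℂ ⧸ scalarSubgroup))) ∧
    Nat.card (Subgroup.closure
        ({(QuotientGroup.mk S_GL : GL (Fin 2) ℂ ⧸ scalarSubgroup),
          QuotientGroup.mk V_GL} : Set (GL (Fin 2) ℂ ⧸ scalarSubgroup))) = 24 := by
  set C := Subgroup.closure
      ({(QuotientGroup.mk S_GL : GL (Fin 2) ℂ ⧸ scalarSubgroup),
        QuotientGroup.mk V_GL} : Set (GL (Fin 2) ℂ ⧸ scalarSubgroup)) with hC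
  have hsub : ∀ x ∈ C, ∃ j, x = Q j := by
    intro x hx
    have hp : ∀ k : Fin 24, ∃ j, Q k * x = Q j := by
      refine Subgroup.closure_induction
        (p := fun y _ => ∀ k : Fin 24, ∃ j, Q k * y = Q j) ?_ ?_ ?_ ?_ hx
      · intro y hy k
        simp only [Set.mem_insert_iff, Set.mem_singleton_iff] at hy
        rcases hy with hy | hy
        · rw [hy, mk_S_GL_eq]; exact ⟨sigS k, QmulS k⟩
        · rw [hy, mk_V_GL_eq]; exact ⟨sigW k, QmulW k⟩
      · intro k; exact ⟨k, mul_one _⟩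
      · intro y z _ _ hy hz k
        obtain ⟨j, hj⟩ := hy k
        obtain ⟨j', hj'⟩ := hz j
        exact ⟨j', by rw [← mul_assoc, hj, hj']⟩
      · intro y _ hy
        choose g hg using hy
        have ginj : Function.Injective g := by
          intro a b hab
          apply Q_injective
          have h1 := hg a
          rw [hab, ← hg b] at h1
          exact mul_right_cancel h1
        have gsurj : Function.Surjective g := Finite.injective_iff_surjective.mp ginj
        intro k
        obtain ⟨m, hm⟩ := gsurj k
        refine ⟨m, ?_⟩
        have h2 := hg m
        rw [hm] at h2
        rw [← h2, mul_assoc]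
        simp
    obtain ⟨j, hj⟩ := hp 0
    exact ⟨j, by rw [← hj, Q_zero, one_mul]⟩
  have hrange : (C : Set (GL (Fin 2) ℂ ⧸ scalarSubgroup)) = Set.range Q := by
    ext x
    constructor
    · intro hx
      obtain ⟨j, hj⟩ := hsub x hx
      exact ⟨j, hj.symm⟩
    · rintro ⟨j, rfl⟩
      exact Q_mem_closure j
  constructor
  · rw [← SetLike.coe_sort_coe, hrange]
    exact (Set.finite_range Q).to_subtype
  · rw [← SetLike.coe_sort_coe, hrange]
    rw [Nat.card_congr (Equiv.ofInjective Q Q_injective).symm]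
    simp
end

section
/- Let V be a finite type, G a simple graph on V, O ⊆ V a set of vertices (the outputs), ≤ a partial order on V, and f a function defined on the vertices not in O with values in V, such that for every v ∉ O: (F1) v is adjacent to f(v) in G, (F2) v ≤ f(v) and v ≠ f(v), and (F3) for every vertex u adjacent to f(v) in G, v ≤ u. Then f is injective: if v, w ∉ O and f(v) = f(w) then v = w. -/
/-- The flow function of a causal flow is injective (on vertices outside the
output set `O`): this is the key fact underlying the disjointness of the
input-to-output flow paths of a circuit-like diagram. -/
theorem causal_flow_function_injective {V : Type*} [Fintype V] [PartialOrder V]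
    (G : SimpleGraph V) (O : Set V) (f : V → V)
    (hF1 : ∀ v ∉ O, G.Adj v (f v))
    (hF2 : ∀ v ∉ O, v ≤ f v ∧ v ≠ f v)
    (hF3 : ∀ v ∉ O, ∀ u, G.Adj u (f v) → v ≤ u) :
    ∀ v ∉ O, ∀ w ∉ O, f v = f w → v = w := by
  intro v hv w hw h
  have h1 : v ≤ w := hF3 v hv w (h ▸ hF1 w hw)
  have h2 : w ≤ v := hF3 w hw v (h ▸ hF1 v hv)
  exact le_antisymm h1 h2
end
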